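/- Let n, k be integers with 1 ≤ k < n, K = {p ∈ [0,1]^n : Σ_i p_i = k}, and U ⊆ {1,…,n} with |U| = k. Then the function f̄_U is polynomially bounded on K. -/

import Mathlib

open Finset

def cube (n : ℕ) : Set (Fin n → ℝ) := {p | ∀ i, 0 ≤ p i ∧ p i ≤ 1}

/-- The open face `F_{A,S,B}` of the hypercube, where `S` is the complement of `A ∪ B`. -/
def face {n : ℕ} (A B : Finset (Fin n)) : Set (Fin n → ℝ) :=
  {p | (∀ i ∈ A, p i = 0) ∧ (∀ i ∈ B, p i = 1) ∧ ∀ i ∉ A ∪ B, 0 < p i ∧ p i < 1}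

/-- `(1-p)^A · (p(1-p))^S · p^B` for the face `F_{A,S,B}`. -/
noncomputable def facePoly {n : ℕ} (A B : Finset (Fin n)) (p : Fin n → ℝ) : ℝ :=
  (∏ i ∈ A, (1 - p i)) * (∏ i ∈ (A ∪ B)ᶜ, p i * (1 - p i)) * (∏ i ∈ B, p i)
/-- A function `f : K → [0,1]` is polynomially bounded on the compact subdomain `K`. -/
def PolyBoundedOn {n : ℕ} (K : Set (Fin n → ℝ)) (f : (Fin n → ℝ) → ℝ) : Prop :=
  ∃ (m : ℕ) (c : ℝ), 0 < c ∧ ∀ A B : Finset (Fin n), Disjoint A B →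
    (∃ q ∈ K ∩ face A B, 0 < f q) →
    ∀ p ∈ K, c * facePoly A B p ^ m ≤ f p
/-- The domain `K = {p ∈ [0,1]^n : ∑ i, p i = k}`. -/
def Ksimplex (n k : ℕ) : Set (Fin n → ℝ) :=
  {p | (∀ i, 0 ≤ p i ∧ p i ≤ 1) ∧ ∑ i, p i = (k : ℝ)}

/-- `g_U(x) = (1/(n-k)) · ∏_{i∈U} x_i · ∏_{i∉U} (1-x_i) · ∑_{i∉U} x_i`. -/
noncomputable def gSampford (n k : ℕ) (U : Finset (Fin n)) (x : Fin n → ℝ) : ℝ :=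
  (1 / ((n : ℝ) - (k : ℝ))) * (∏ i ∈ U, x i) * (∏ i ∈ Uᶜ, (1 - x i)) * (∑ i ∈ Uᶜ, x i)

/-- `∑_{V ⊆ [n], |V| = k} g_V(x)`. -/
noncomputable def sumg (n k : ℕ) (x : Fin n → ℝ) : ℝ :=
  ∑ V ∈ Finset.powersetCard k (Finset.univ : Finset (Fin n)), gSampford n k V x

/-- The indicator vector `e_U` of a subset `U`. -/
def eU {n : ℕ} (U : Finset (Fin n)) : Fin n → ℝ := fun i => if i ∈ U then 1 else 0
open Classical in
/-- The continuous completion `f̄_U` of `f_U = g_U / ∑_V g_V` on `K`. -/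
noncomputable def fbar (n k : ℕ) (U : Finset (Fin n)) (x : Fin n → ℝ) : ℝ :=
  if x = eU U then 1
  else if ∃ V : Finset (Fin n), V.card = k ∧ x = eU V then 0
  else gSampford n k U x / sumg n k x


/-! ### Auxiliary lemmas -/

noncomputable def hpoly {n : ℕ} (U : Finset (Fin n)) (p : Fin n → ℝ) : ℝ :=
  (∏ i ∈ U, p i) * (∏ i ∈ Uᶜ, (1 - p i))

section Basic
variable {n k : ℕ} {p : Fin n → ℝ}

lemma prodP_nonneg (hp : ∀ i, 0 ≤ p i ∧ p i ≤ 1) (V : Finset (Fin n)) :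
    0 ≤ ∏ i ∈ V, p i :=
  Finset.prod_nonneg fun i _ => (hp i).1

lemma prodP_le_one (hp : ∀ i, 0 ≤ p i ∧ p i ≤ 1) (V : Finset (Fin n)) :
    ∏ i ∈ V, p i ≤ 1 :=
  Finset.prod_le_one (fun i _ => (hp i).1) (fun i _ => (hp i).2)

lemma prodC_nonneg (hp : ∀ i, 0 ≤ p i ∧ p i ≤ 1) (V : Finset (Fin n)) :
    0 ≤ ∏ i ∈ V, (1 - p i) :=
  Finset.prod_nonneg fun i _ => by linarith [(hp i).2]

lemma prodC_le_one (hp : ∀ i, 0 ≤ p i ∧ p i ≤ 1) (V : Finset (Fin n)) :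
    ∏ i ∈ V, (1 - p i) ≤ 1 :=
  Finset.prod_le_one (fun i _ => by linarith [(hp i).2]) (fun i _ => by linarith [(hp i).1])

lemma hpoly_nonneg (hp : ∀ i, 0 ≤ p i ∧ p i ≤ 1) (U : Finset (Fin n)) :
    0 ≤ hpoly U p :=
  mul_nonneg (prodP_nonneg hp U) (prodC_nonneg hp Uᶜ)

lemma hpoly_le_one (hp : ∀ i, 0 ≤ p i ∧ p i ≤ 1) (U : Finset (Fin n)) :
    hpoly U p ≤ 1 :=
  mul_le_one₀ (prodP_le_one hp U) (prodC_nonneg hp Uᶜ) (prodC_le_one hp Uᶜ)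

lemma sum_compl_eq (hp : p ∈ Ksimplex n k) (V : Finset (Fin n)) :
    ∑ i ∈ Vᶜ, p i = (k : ℝ) - ∑ i ∈ V, p i := by
  have := Finset.sum_add_sum_compl V p
  rw [hp.2] at this
  linarith

lemma sum_compl_nonneg (hp : p ∈ Ksimplex n k) (V : Finset (Fin n)) :
    0 ≤ ∑ i ∈ Vᶜ, p i :=
  Finset.sum_nonneg fun i _ => (hp.1 i).1

lemma sum_compl_le (hp : p ∈ Ksimplex n k) (V : Finset (Fin n)) :
    ∑ i ∈ Vᶜ, p i ≤ (k : ℝ) := by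
  rw [sum_compl_eq hp V]
  have : 0 ≤ ∑ i ∈ V, p i := Finset.sum_nonneg fun i _ => (hp.1 i).1
  linarith

lemma g_nonneg (hkn : k < n) (hp : p ∈ Ksimplex n k) (V : Finset (Fin n)) :
    0 ≤ gSampford n k V p := by
  have h1 : (0:ℝ) < (n:ℝ) - (k:ℝ) := by
    have : (k:ℝ) < (n:ℝ) := by exact_mod_cast hkn
    linarith
  unfold gSampford
  have := prodP_nonneg hp.1 V
  have := prodC_nonneg hp.1 Vᶜ
  have := sum_compl_nonneg hp V
  positivity

end Basic
section Key
variable {n k : ℕ} {p : Fin n → ℝ} {U V : Finset (Fin n)}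

lemma g_le_of_ne (hkn : k < n) (hp : p ∈ Ksimplex n k) (hUk : U.card = k)
    (hVk : V.card = k) (hne : V ≠ U) :
    gSampford n k V p ≤ ((k : ℝ) / ((n:ℝ) - (k:ℝ))) * ∑ i ∈ Uᶜ, p i := by
  have hnk : (0:ℝ) < (n:ℝ) - (k:ℝ) := by
    have : (k:ℝ) < (n:ℝ) := by exact_mod_cast hkn
    linarith
  -- pick j ∈ V \ U
  have hVU : ¬ V ⊆ U := by
    intro hsub
    exact hne (Finset.eq_of_subset_of_card_le hsub (by omega))
  obtain ⟨j, hjV, hjU⟩ := Finset.not_subset.mp hVU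
  have hprodV : ∏ i ∈ V, p i ≤ p j := by
    rw [← Finset.mul_prod_erase V p hjV]
    have h1 : ∏ i ∈ V.erase j, p i ≤ 1 := prodP_le_one hp.1 _
    have h2 : 0 ≤ ∏ i ∈ V.erase j, p i := prodP_nonneg hp.1 _
    nlinarith [(hp.1 j).1]
  have hj_sum : p j ≤ ∑ i ∈ Uᶜ, p i :=
    Finset.single_le_sum (fun i _ => (hp.1 i).1) (Finset.mem_compl.mpr hjU)
  have h3 : ∏ i ∈ V, p i ≤ ∑ i ∈ Uᶜ, p i := le_trans hprodV hj_sum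
  have h4 : 0 ≤ ∏ i ∈ V, p i := prodP_nonneg hp.1 V
  have h5 : ∏ i ∈ Vᶜ, (1 - p i) ≤ 1 := prodC_le_one hp.1 _
  have h6 : 0 ≤ ∏ i ∈ Vᶜ, (1 - p i) := prodC_nonneg hp.1 _
  have h7 : ∑ i ∈ Vᶜ, p i ≤ (k:ℝ) := sum_compl_le hp V
  have h8 : 0 ≤ ∑ i ∈ Vᶜ, p i := sum_compl_nonneg hp V
  have h9 : 0 ≤ ∑ i ∈ Uᶜ, p i := sum_compl_nonneg hp U
  unfold gSampford
  have hstep : (∏ i ∈ V, p i) * (∏ i ∈ Vᶜ, (1 - p i)) * (∑ i ∈ Vᶜ, p i)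
      ≤ (∑ i ∈ Uᶜ, p i) * (k:ℝ) := by
    have : (∏ i ∈ V, p i) * (∏ i ∈ Vᶜ, (1 - p i)) ≤ ∑ i ∈ Uᶜ, p i := by
      nlinarith
    nlinarith
  have hc : 0 < 1 / ((n:ℝ) - (k:ℝ)) := by positivity
  calc 1 / ((n:ℝ) - (k:ℝ)) * (∏ i ∈ V, p i) * (∏ i ∈ Vᶜ, (1 - p i)) * (∑ i ∈ Vᶜ, p i)
      = 1 / ((n:ℝ) - (k:ℝ)) * ((∏ i ∈ V, p i) * (∏ i ∈ Vᶜ, (1 - p i)) * (∑ i ∈ Vᶜ, p i)) := by ring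
    _ ≤ 1 / ((n:ℝ) - (k:ℝ)) * ((∑ i ∈ Uᶜ, p i) * (k:ℝ)) := by
        exact mul_le_mul_of_nonneg_left hstep (le_of_lt hc)
    _ = ((k : ℝ) / ((n:ℝ) - (k:ℝ))) * ∑ i ∈ Uᶜ, p i := by ring

lemma key_ineq (hk : 1 ≤ k) (hkn : k < n) (hp : p ∈ Ksimplex n k) (hUk : U.card = k) :
    hpoly U p * sumg n k p
      ≤ ((Finset.powersetCard k (Finset.univ : Finset (Fin n))).card * k : ℝ)
          * gSampford n k U p := by
  have hgU : 0 ≤ gSampford n k U p := g_nonneg hkn hp U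
  have hh0 : 0 ≤ hpoly U p := hpoly_nonneg hp.1 U
  have hh1 : hpoly U p ≤ 1 := hpoly_le_one hp.1 U
  have hk1 : (1:ℝ) ≤ (k:ℝ) := by exact_mod_cast hk
  unfold sumg
  rw [Finset.mul_sum]
  have hbound : ∀ V ∈ Finset.powersetCard k (Finset.univ : Finset (Fin n)),
      hpoly U p * gSampford n k V p ≤ (k:ℝ) * gSampford n k U p := by
    intro V hV
    have hVk : V.card = k := (Finset.mem_powersetCard_univ).mp hV
    by_cases hVU : V = U
    · subst hVU
      nlinarith [g_nonneg hkn hp V]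
    · have h1 := g_le_of_ne hkn hp hUk hVk hVU
      have : hpoly U p * gSampford n k V p
          ≤ hpoly U p * (((k:ℝ) / ((n:ℝ) - (k:ℝ))) * ∑ i ∈ Uᶜ, p i) :=
        mul_le_mul_of_nonneg_left h1 hh0
      calc hpoly U p * gSampford n k V p
          ≤ hpoly U p * (((k:ℝ) / ((n:ℝ) - (k:ℝ))) * ∑ i ∈ Uᶜ, p i) := this
        _ = (k:ℝ) * gSampford n k U p := by
            unfold hpoly gSampford; ring
  calc ∑ V ∈ Finset.powersetCard k (Finset.univ : Finset (Fin n)),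
        hpoly U p * gSampford n k V p
      ≤ ∑ _V ∈ Finset.powersetCard k (Finset.univ : Finset (Fin n)),
        (k:ℝ) * gSampford n k U p := Finset.sum_le_sum hbound
    _ = ((Finset.powersetCard k (Finset.univ : Finset (Fin n))).card * k : ℝ)
          * gSampford n k U p := by
        rw [Finset.sum_const, nsmul_eq_mul]; ring

end Key
section Pos
variable {n k : ℕ} {p : Fin n → ℝ}

lemma sumg_pos (hk : 1 ≤ k) (hkn : k < n) (hp : p ∈ Ksimplex n k)
    (hnv : ∀ V : Finset (Fin n), V.card = k → p ≠ eU V) :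
    0 < sumg n k p := by
  have hnk : (0:ℝ) < (n:ℝ) - (k:ℝ) := by
    have : (k:ℝ) < (n:ℝ) := by exact_mod_cast hkn
    linarith
  classical
  set T : Finset (Fin n) := Finset.univ.filter (fun i => p i = 1) with hT
  set S1 : Finset (Fin n) := Finset.univ.filter (fun i => 0 < p i) with hS1
  have hTS1 : T ⊆ S1 := by
    intro i hi
    simp only [hT, hS1, Finset.mem_filter, Finset.mem_univ, true_and] at *
    rw [hi]; norm_num
  -- |T| ≤ k
  have hTsum : (T.card : ℝ) = ∑ i ∈ T, p i := by
    rw [Finset.sum_congr rfl (fun i hi => by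
      simp only [hT, Finset.mem_filter] at hi; exact hi.2)]
    simp
  have hTk : T.card ≤ k := by
    have h1 : ∑ i ∈ T, p i ≤ ∑ i, p i :=
      Finset.sum_le_sum_of_subset_of_nonneg (Finset.subset_univ T)
        (fun i _ _ => (hp.1 i).1)
    rw [hp.2] at h1
    rw [← hTsum] at h1
    exact_mod_cast h1
  -- k ≤ |S1|
  have hS1sum : ∑ i ∈ S1, p i = (k : ℝ) := by
    rw [← hp.2]
    apply Finset.sum_subset (Finset.subset_univ S1)
    intro i _ hi
    simp only [hS1, Finset.mem_filter, Finset.mem_univ, true_and, not_lt] at hi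
    linarith [(hp.1 i).1]
  have hkS1 : k ≤ S1.card := by
    have h1 : ∑ i ∈ S1, p i ≤ (S1.card : ℝ) := by
      calc ∑ i ∈ S1, p i ≤ ∑ _i ∈ S1, (1:ℝ) :=
            Finset.sum_le_sum (fun i _ => (hp.1 i).2)
        _ = (S1.card : ℝ) := by simp
    rw [hS1sum] at h1
    exact_mod_cast h1
  -- intermediate set V
  obtain ⟨V, hTV, hVS1, hVcard⟩ :=
    Finset.exists_subsuperset_card_eq (n := k - T.card + T.card) hTS1 (by omega) (by omega)
  have hVk : V.card = k := by rw [hVcard]; omega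
  -- the factors of g_V are positive
  have hposV : ∀ i ∈ V, 0 < p i := by
    intro i hi
    have := hVS1 hi
    simpa [hS1] using this
  have hlt1 : ∀ i ∉ V, p i < 1 := by
    intro i hi
    have hiT : i ∉ T := fun h => hi (hTV h)
    simp only [hT, Finset.mem_filter, Finset.mem_univ, true_and] at hiT
    exact lt_of_le_of_ne (hp.1 i).2 hiT
  have hsumpos : 0 < ∑ i ∈ Vᶜ, p i := by
    rcases lt_or_eq_of_le (sum_compl_nonneg hp V) with h | h
    · exact h
    · exfalso
      -- ∑_{Vᶜ} p = 0 so ∑_V p = k = |V|, forcing p = eU V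
      have hsumV : ∑ i ∈ V, p i = (k : ℝ) := by
        have := sum_compl_eq hp V
        rw [← h] at this
        linarith
      have hall1 : ∀ i ∈ V, p i = 1 := by
        by_contra hcon
        push_neg at hcon
        obtain ⟨i, hiV, hi1⟩ := hcon
        have : ∑ i ∈ V, p i < ∑ _i ∈ V, (1:ℝ) :=
          Finset.sum_lt_sum (fun j _ => (hp.1 j).2)
            ⟨i, hiV, lt_of_le_of_ne (hp.1 i).2 hi1⟩
        rw [hsumV] at this
        simp only [Finset.sum_const, nsmul_eq_mul, mul_one] at this
        rw [hVk] at this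
        exact lt_irrefl _ this
      have hall0 : ∀ i ∉ V, p i = 0 := by
        intro i hi
        have h0 : ∑ j ∈ Vᶜ, p j = 0 := h.symm
        have := (Finset.sum_eq_zero_iff_of_nonneg
          (fun j _ => (hp.1 j).1)).mp h0 i (Finset.mem_compl.mpr hi)
        exact this
      apply hnv V hVk
      funext i
      by_cases hi : i ∈ V
      · simp [eU, hi, hall1 i hi]
      · simp [eU, hi, hall0 i hi]
  have hgV : 0 < gSampford n k V p := by
    unfold gSampford
    have h1 : 0 < ∏ i ∈ V, p i := Finset.prod_pos hposV
    have h2 : 0 < ∏ i ∈ Vᶜ, (1 - p i) :=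
      Finset.prod_pos (fun i hi => by
        have := hlt1 i (Finset.mem_compl.mp hi); linarith)
    positivity
  have hVmem : V ∈ Finset.powersetCard k (Finset.univ : Finset (Fin n)) :=
    Finset.mem_powersetCard_univ.mpr hVk
  calc (0:ℝ) < gSampford n k V p := hgV
    _ ≤ sumg n k p :=
      Finset.single_le_sum (fun W _ => g_nonneg hkn hp W) hVmem

end Pos
section Core
variable {n k : ℕ} {p q : Fin n → ℝ} {U : Finset (Fin n)}

lemma hpoly_eU_of_ne (hUk : U.card = k) {V : Finset (Fin n)} (hVk : V.card = k)
    (hne : V ≠ U) : hpoly U (eU V) = 0 := by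
  have hUV : ¬ U ⊆ V := by
    intro hsub
    exact hne (Finset.eq_of_subset_of_card_le hsub (by omega)).symm
  obtain ⟨i, hiU, hiV⟩ := Finset.not_subset.mp hUV
  unfold hpoly
  rw [Finset.prod_eq_zero hiU (by simp [eU, hiV]), zero_mul]

lemma core_bound (hk : 1 ≤ k) (hkn : k < n) (hUk : U.card = k)
    (hp : p ∈ Ksimplex n k) :
    (1 / (((Finset.powersetCard k (Finset.univ : Finset (Fin n))).card * k : ℝ)))
      * hpoly U p ≤ fbar n k U p := by
  set N : ℕ := (Finset.powersetCard k (Finset.univ : Finset (Fin n))).card with hN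
  have hNpos : 0 < N := by
    rw [hN, Finset.card_powersetCard, Finset.card_univ, Fintype.card_fin]
    exact Nat.choose_pos (le_of_lt hkn)
  have hNk : (0:ℝ) < (N:ℝ) * (k:ℝ) := by
    have h1 : (0:ℝ) < (N:ℝ) := by exact_mod_cast hNpos
    have h2 : (0:ℝ) < (k:ℝ) := by exact_mod_cast hk
    positivity
  have hNk1 : (1:ℝ) ≤ (N:ℝ) * (k:ℝ) := by
    have h1 : (1:ℝ) ≤ (N:ℝ) := by exact_mod_cast hNpos
    have h2 : (1:ℝ) ≤ (k:ℝ) := by exact_mod_cast hk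
    nlinarith
  have hh0 : 0 ≤ hpoly U p := hpoly_nonneg hp.1 U
  have hh1 : hpoly U p ≤ 1 := hpoly_le_one hp.1 U
  unfold fbar
  split_ifs with h1 h2
  · -- p = eU U : fbar = 1
    have : 1 / ((N:ℝ) * (k:ℝ)) ≤ 1 := by
      rw [div_le_one hNk]; linarith
    nlinarith
  · -- p a different vertex : fbar = 0, hpoly = 0
    obtain ⟨V, hVk, hpV⟩ := h2
    have hne : V ≠ U := by
      intro h; rw [h] at hpV; exact h1 hpV
    rw [hpV, hpoly_eU_of_ne hUk hVk hne]
    simp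
  · -- interior-ish point
    push_neg at h2
    have hs : 0 < sumg n k p := sumg_pos hk hkn hp h2
    rw [le_div_iff₀ hs]
    have hkey := key_ineq hk hkn hp hUk
    rw [← hN] at hkey
    calc 1 / ((N:ℝ) * (k:ℝ)) * hpoly U p * sumg n k p
        = (hpoly U p * sumg n k p) / ((N:ℝ) * (k:ℝ)) := by ring
      _ ≤ ((N:ℝ) * (k:ℝ) * gSampford n k U p) / ((N:ℝ) * (k:ℝ)) := by
          gcongr
      _ = gSampford n k U p := by field_simp

lemma fbar_pos_struct (hk : 1 ≤ k) (hkn : k < n) (hUk : U.card = k)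
    (hq : q ∈ Ksimplex n k) (hf : 0 < fbar n k U q) :
    (∀ i ∈ U, 0 < q i) ∧ (∀ i ∉ U, q i < 1) := by
  unfold fbar at hf
  split_ifs at hf with h1 h2
  · subst h1
    constructor
    · intro i hi; simp [eU, hi]
    · intro i hi; simp [eU, hi]
  · exact absurd hf (lt_irrefl 0)
  · push_neg at h2
    have hs : 0 < sumg n k q := sumg_pos hk hkn hq h2
    have hg : 0 < gSampford n k U q := by
      by_contra hcon
      push_neg at hcon
      have : gSampford n k U q / sumg n k q ≤ 0 := div_nonpos_of_nonpos_of_nonneg hcon (le_of_lt hs)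
      linarith
    have hP1 : ∏ i ∈ U, q i ≠ 0 := by
      intro h0
      rw [gSampford, h0] at hg
      simp at hg
    have hP2 : ∏ i ∈ Uᶜ, (1 - q i) ≠ 0 := by
      intro h0
      rw [gSampford, h0] at hg
      simp at hg
    constructor
    · intro i hi
      rcases lt_or_eq_of_le (hq.1 i).1 with h | h
      · exact h
      · exact absurd (Finset.prod_eq_zero hi h.symm) hP1
    · intro i hi
      rcases lt_or_eq_of_le (hq.1 i).2 with h | h
      · exact h
      · exact absurd (Finset.prod_eq_zero (Finset.mem_compl.mpr hi)
          (by rw [h]; ring)) hP2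

end Core
section Face
variable {n k : ℕ} {p : Fin n → ℝ} {U A B : Finset (Fin n)}

lemma facePoly_le_hpoly (hp : ∀ i, 0 ≤ p i ∧ p i ≤ 1)
    (hA : ∀ i ∈ A, i ∉ U) (hB : B ⊆ U) :
    facePoly A B p ≤ hpoly U p := by
  classical
  have hsplit : (A ∪ B)ᶜ = (U \ B) ∪ (Uᶜ \ A) := by
    ext i
    simp only [Finset.mem_compl, Finset.mem_union, Finset.mem_sdiff, not_or]
    have h1 : i ∈ A → i ∉ U := hA i
    have h2 : i ∈ B → i ∈ U := fun h => hB h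
    tauto
  have hdisj : Disjoint (U \ B) (Uᶜ \ A) := by
    apply Finset.disjoint_left.mpr
    intro i hi1 hi2
    exact (Finset.mem_compl.mp (Finset.mem_sdiff.mp hi2).1) (Finset.mem_sdiff.mp hi1).1
  have hprodU : (∏ i ∈ U \ B, p i) * ∏ i ∈ B, p i = ∏ i ∈ U, p i :=
    Finset.prod_sdiff hB
  have hAsub : A ⊆ Uᶜ := fun i hi => Finset.mem_compl.mpr (hA i hi)
  have hprodC : (∏ i ∈ Uᶜ \ A, (1 - p i)) * ∏ i ∈ A, (1 - p i) = ∏ i ∈ Uᶜ, (1 - p i) :=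
    Finset.prod_sdiff hAsub
  unfold facePoly hpoly
  rw [hsplit, Finset.prod_union hdisj, ← hprodU, ← hprodC]
  have e1 : ∏ i ∈ U \ B, p i * (1 - p i) ≤ ∏ i ∈ U \ B, p i := by
    apply Finset.prod_le_prod
    · intro i _; have := hp i; nlinarith [(hp i).1, (hp i).2]
    · intro i _; nlinarith [(hp i).1, (hp i).2]
  have e2 : ∏ i ∈ Uᶜ \ A, p i * (1 - p i) ≤ ∏ i ∈ Uᶜ \ A, (1 - p i) := by
    apply Finset.prod_le_prod
    · intro i _; nlinarith [(hp i).1, (hp i).2]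
    · intro i _; nlinarith [(hp i).1, (hp i).2]
  have n1 : 0 ≤ ∏ i ∈ A, (1 - p i) := prodC_nonneg hp A
  have n2 : 0 ≤ ∏ i ∈ B, p i := prodP_nonneg hp B
  have n3 : 0 ≤ ∏ i ∈ U \ B, p i * (1 - p i) :=
    Finset.prod_nonneg fun i _ => by nlinarith [(hp i).1, (hp i).2]
  have n4 : 0 ≤ ∏ i ∈ Uᶜ \ A, p i * (1 - p i) :=
    Finset.prod_nonneg fun i _ => by nlinarith [(hp i).1, (hp i).2]
  have n5 : 0 ≤ ∏ i ∈ U \ B, p i := prodP_nonneg hp _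
  have n6 : 0 ≤ ∏ i ∈ Uᶜ \ A, (1 - p i) := prodC_nonneg hp _
  nlinarith [mul_le_mul e1 e2 n4 n5, mul_nonneg n1 n2,
    mul_nonneg (mul_nonneg n5 n6) (mul_nonneg n1 n2)]

end Face

theorem stmt15 (n k : ℕ) (hk : 1 ≤ k) (hkn : k < n)
    (U : Finset (Fin n)) (hU : U.card = k) :
    PolyBoundedOn (Ksimplex n k) (fbar n k U) := by
  classical
  set N : ℕ := (Finset.powersetCard k (Finset.univ : Finset (Fin n))).card with hN
  have hNpos : 0 < N := by
    rw [hN, Finset.card_powersetCard, Finset.card_univ, Fintype.card_fin]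
    exact Nat.choose_pos (le_of_lt hkn)
  have hNk : (0:ℝ) < (N:ℝ) * (k:ℝ) := by
    have h1 : (0:ℝ) < (N:ℝ) := by exact_mod_cast hNpos
    have h2 : (0:ℝ) < (k:ℝ) := by exact_mod_cast hk
    positivity
  refine ⟨1, 1 / ((N:ℝ) * (k:ℝ)), by positivity, ?_⟩
  intro A B _hAB ⟨q, ⟨hqK, hqF⟩, hqf⟩ p hp
  obtain ⟨hqU, hqUc⟩ := fbar_pos_struct hk hkn hU hqK hqf
  have hA : ∀ i ∈ A, i ∉ U := by
    intro i hi hiU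
    have h0 : q i = 0 := hqF.1 i hi
    have := hqU i hiU
    linarith
  have hB : B ⊆ U := by
    intro i hi
    by_contra hiU
    have h1 : q i = 1 := hqF.2.1 i hi
    have := hqUc i hiU
    linarith
  have hface := facePoly_le_hpoly hp.1 hA hB
  have hcore := core_bound hk hkn hU hp
  rw [← hN] at hcore
  rw [pow_one]
  calc 1 / ((N:ℝ) * (k:ℝ)) * facePoly A B p
      ≤ 1 / ((N:ℝ) * (k:ℝ)) * hpoly U p := by
        apply mul_le_mul_of_nonneg_left hface (by positivity)
    _ ≤ fbar n k U p := hcore
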